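/- For every γ > 0, the largest root t* of the quadratic 2(1 + 1/γ − c)t² − 2√2·c·t + (1 + 1/γ)ln(1+γ) − c = 0, with c = 1 + 1/(2γ), satisfies t* < 2√2·(γ + 3/4). -/

import Mathlib

/-- For every `γ > 0`, every root (in particular the largest root) of the quadratic
`2(1 + 1/γ − c)t² − 2√2·c·t + (1 + 1/γ)ln(1+γ) − c = 0`, with `c = 1 + 1/(2γ)`,
satisfies `t < 2√2·(γ + 3/4)`. -/
theorem stmt_5 (γ : ℝ) (hγ : 0 < γ) (c : ℝ) (hc : c = 1 + 1 / (2 * γ))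
    (t : ℝ)
    (hroot : 2 * (1 + 1 / γ - c) * t ^ 2 - 2 * Real.sqrt 2 * c * t
      + (1 + 1 / γ) * Real.log (1 + γ) - c = 0) :
    t < 2 * Real.sqrt 2 * (γ + 3 / 4) := by
  by_contra h
  push_neg at h
  have hs : Real.sqrt 2 ^ 2 = 2 := Real.sq_sqrt (by norm_num)
  have hs0 : 0 < Real.sqrt 2 := by positivity
  have hlog : 0 < Real.log (1 + γ) := Real.log_pos (by linarith)
  subst hc
  have hγ' : (γ:ℝ) ≠ 0 := hγ.ne'
  -- multiply the quadratic equation through by γ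
  have hroot' : t ^ 2 - 2 * Real.sqrt 2 * (γ + 1 / 2) * t
      + (γ + 1) * Real.log (1 + γ) - (γ + 1 / 2) = 0 := by
    have key : 1 + 1 / γ - (1 + 1 / (2 * γ)) = 1 / (2 * γ) := by field_simp; ring
    rw [key] at hroot
    field_simp at hroot
    linear_combination hroot / 2
  -- the quadratic is increasing past its vertex and positive at T = 2√2(γ+3/4)
  have hmono : 0 ≤ t + 2 * Real.sqrt 2 * (γ + 3 / 4) - 2 * Real.sqrt 2 * (γ + 1 / 2) := by
    nlinarith
  nlinarith [mul_nonneg (sub_nonneg.2 h) hmono,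
    mul_pos (show (0:ℝ) < γ + 1 by linarith) hlog]
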